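/- For every integer n ≥ 3, the tree-depth of the cycle graph C_n on n vertices equals ⌊log₂ (n−1)⌋ + 2. -/

import Mathlib

/-- A `k`-ranking of a simple graph `G`: a labeling of the vertices with values from
`{1, …, k}` such that every path joining two distinct vertices with the same label
contains a vertex with a strictly higher label. -/
def IsRanking {V : Type*} (G : SimpleGraph V) (k : ℕ) (f : V → ℕ) : Prop :=
  (∀ v, 1 ≤ f v ∧ f v ≤ k) ∧
  ∀ ⦃u v : V⦄ (p : G.Walk u v), p.IsPath → u ≠ v → f u = f v →
    ∃ w ∈ p.support, f u < f w

/-- The tree-depth of `G`: the least `k` such that `G` admits a `k`-ranking. -/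
noncomputable def treedepth {V : Type*} (G : SimpleGraph V) : ℕ :=
  sInf {k | ∃ f, IsRanking G k f}

open scoped Fin.NatCast Fin.IntCast Fin.CommRing

/-- Ranking property on the interval `[1, m]` of ℕ. -/
def PathRank (m k : ℕ) (g : ℕ → ℕ) : Prop :=
  (∀ i, 1 ≤ i → i ≤ m → 1 ≤ g i ∧ g i ≤ k) ∧
  (∀ i j, 1 ≤ i → i < j → j ≤ m → g i = g j → ∃ l, i < l ∧ l < j ∧ g i < g l)

theorem pathRank_le {k : ℕ} : ∀ {m : ℕ} {g : ℕ → ℕ}, PathRank m k g → m ≤ 2 ^ k - 1 := by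
  induction k with
  | zero =>
    intro m g ⟨hb, _⟩
    by_contra h
    have := hb 1 le_rfl (by omega)
    omega
  | succ k ih =>
    intro m g ⟨hb, hr⟩
    by_cases hex : ∃ i, 1 ≤ i ∧ i ≤ m ∧ g i = k + 1
    · obtain ⟨i0, hi1, him, hgi⟩ := hex
      -- left part
      have hleft : i0 - 1 ≤ 2 ^ k - 1 := by
        apply ih (g := g) (m := i0 - 1)
        constructor
        · intro i h1 h2
          have := hb i h1 (by omega)
          rcases Nat.lt_or_ge (g i) (k+1) with h | h
          · omega
          · exfalso
            have heq : g i = g i0 := by omega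
            obtain ⟨l, hl1, hl2, hl3⟩ := hr i i0 h1 (by omega) him heq
            have := hb l (by omega) (by omega)
            omega
        · intro i j h1 h2 h3 h4
          exact hr i j h1 h2 (by omega) h4
      -- right part
      have hright : m - i0 ≤ 2 ^ k - 1 := by
        apply ih (g := fun j => g (j + i0)) (m := m - i0)
        constructor
        · intro i h1 h2
          show 1 ≤ g (i + i0) ∧ g (i + i0) ≤ k
          have := hb (i + i0) (by omega) (by omega)
          rcases Nat.lt_or_ge (g (i + i0)) (k+1) with h | h
          · omega
          · exfalso
            have heq : g i0 = g (i + i0) := by omega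
            obtain ⟨l, hl1, hl2, hl3⟩ := hr i0 (i + i0) hi1 (by omega) (by omega) heq
            have := hb l (by omega) (by omega)
            omega
        · intro i j h1 h2 h3 h4
          obtain ⟨l, hl1, hl2, hl3⟩ := hr (i + i0) (j + i0) (by omega) (by omega) (by omega) h4
          refine ⟨l - i0, by omega, by omega, ?_⟩
          show g (i + i0) < g (l - i0 + i0)
          rwa [Nat.sub_add_cancel (by omega : i0 ≤ l)]
      have h2 : (0:ℕ) < 2 ^ k := Nat.pow_pos (by norm_num)
      have : (2:ℕ) ^ (k+1) = 2 * 2 ^ k := by ring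
      omega
    · push_neg at hex
      have : m ≤ 2 ^ k - 1 := by
        apply ih (g := g)
        refine ⟨fun i h1 h2 => ?_, hr⟩
        have := hb i h1 h2
        have := hex i h1 h2
        omega
      have h2 : (0:ℕ) < 2 ^ k := Nat.pow_pos (by norm_num)
      have : (2:ℕ) ^ (k+1) = 2 * 2 ^ k := by ring
      omega

theorem padicValNat_le_log {i m : ℕ} (h1 : 1 ≤ i) (h2 : i ≤ m) :
    padicValNat 2 i ≤ Nat.log 2 m := by
  have hd : 2 ^ padicValNat 2 i ∣ i := pow_padicValNat_dvd
  have : 2 ^ padicValNat 2 i ≤ m := le_trans (Nat.le_of_dvd (by omega) hd) h2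
  exact (Nat.le_log_iff_pow_le (by norm_num) (by omega)).mpr this

/-- `ν₂(i) + 1` is a ranking of the path `[1, m]`. -/
theorem pathRank_val (m : ℕ) :
    PathRank m (Nat.log 2 m + 1) (fun i => padicValNat 2 i + 1) := by
  constructor
  · intro i h1 h2
    have := padicValNat_le_log h1 h2
    show 1 ≤ padicValNat 2 i + 1 ∧ padicValNat 2 i + 1 ≤ Nat.log 2 m + 1
    omega
  · intro i j h1 h2 h3 heq
    show ∃ l, i < l ∧ l < j ∧ padicValNat 2 i + 1 < padicValNat 2 l + 1
    simp only at heq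
    have heq' : padicValNat 2 i = padicValNat 2 j := by omega
    set t := padicValNat 2 i with ht
    have hdi : 2 ^ t ∣ i := pow_padicValNat_dvd
    have hdj : 2 ^ t ∣ j := heq' ▸ pow_padicValNat_dvd
    have hndi : ¬ 2 ^ (t+1) ∣ i := by
      intro h
      have := (padicValNat_dvd_iff (t+1) i).mp h
      omega
    have hndj : ¬ 2 ^ (t+1) ∣ j := by
      intro h
      have := (padicValNat_dvd_iff (t+1) j).mp h
      omega
    obtain ⟨a, ha⟩ := hdi
    have ha2 : a % 2 = 1 := by
      rcases Nat.even_or_odd a with he | ho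
      · exfalso
        obtain ⟨c, hc⟩ := he
        exact hndi ⟨c, by rw [ha, hc]; ring⟩
      · exact Nat.odd_iff.mp ho
    obtain ⟨c, hc⟩ : ∃ c, a = 2 * c + 1 := ⟨a / 2, by omega⟩
    have hdl : 2 ^ (t+1) ∣ i + 2 ^ t := ⟨c + 1, by rw [ha, hc]; ring⟩
    obtain ⟨q, hq⟩ := Nat.dvd_sub hdj (Dvd.intro a ha.symm)
    have hpow : 0 < 2 ^ t := Nat.pow_pos (by norm_num)
    have hq2 : 2 ≤ q := by
      rcases Nat.lt_or_ge q 2 with h | h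
      · interval_cases q
        · omega
        · exact absurd (by omega : j = i + 2 ^ t) (fun hj => hndj (hj ▸ hdl))
      · exact h
    have h5 : 2 ^ t * 2 ≤ 2 ^ t * q := Nat.mul_le_mul_left _ hq2
    refine ⟨i + 2 ^ t, by omega, by omega, ?_⟩
    have : t + 1 ≤ padicValNat 2 (i + 2 ^ t) := by
      rcases (padicValNat_dvd_iff (t+1) (i + 2 ^ t)).mp hdl with h | h
      · omega
      · exact h
    omega
theorem cycle_adj_succ (m : ℕ) (u : Fin (m+3)) :
    (SimpleGraph.cycleGraph (m+3)).Adj u (u+1) := by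
  rw [SimpleGraph.cycleGraph_adj']
  right
  have : u + 1 - u = 1 := by ring
  rw [this]; rfl

theorem val_cast_lt (m i : ℕ) (h : i < m + 3) : ((i : Fin (m+3))).val = i := by
  simp [Fin.val_natCast, Nat.mod_eq_of_lt h]

/-- The arc walk of length `L` starting at `u`. -/
theorem arc_exists (m : ℕ) (u : Fin (m+3)) (L : ℕ) (hL : L ≤ m + 2) :
    ∃ p : (SimpleGraph.cycleGraph (m+3)).Walk u (u + (L : Fin (m+3))),
      p.IsPath ∧ p.length = L ∧ ∀ i, i ≤ L → p.getVert i = u + (i : Fin (m+3)) := by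
  induction L with
  | zero =>
    refine ⟨(SimpleGraph.Walk.nil' u).copy rfl (by push_cast; ring), by simp, by simp, ?_⟩
    intro i hi
    interval_cases i
    simp
  | succ L ih =>
    obtain ⟨p, hp, hlen, hvert⟩ := ih (by omega)
    have hadj : (SimpleGraph.cycleGraph (m+3)).Adj (u + (L : Fin (m+3)))
        (u + ((L+1 : ℕ) : Fin (m+3))) := by
      have : u + ((L+1 : ℕ) : Fin (m+3)) = (u + (L : Fin (m+3))) + 1 := by push_cast; ring
      rw [this]
      exact cycle_adj_succ m _
    have hlen' : (p.concat hadj).length = L + 1 := by simp [hlen]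
    have hvert' : ∀ i, i ≤ L + 1 → (p.concat hadj).getVert i = u + (i : Fin (m+3)) := by
      intro i hi
      rcases Nat.lt_or_ge i (L+1) with h | h
      · rw [SimpleGraph.Walk.concat_eq_append, SimpleGraph.Walk.getVert_append]
        rcases Nat.lt_or_ge i L with h2 | h2
        · rw [if_pos (by omega), hvert i (by omega)]
        · have : i = L := by omega
          subst this
          rw [if_neg (by omega), hlen, Nat.sub_self, SimpleGraph.Walk.getVert_zero]
      · have : i = L + 1 := by omega
        subst this
        have hfin := SimpleGraph.Walk.getVert_length (p.concat hadj)
        rwa [hlen'] at hfin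
    refine ⟨p.concat hadj, ?_, hlen', hvert'⟩
    rw [SimpleGraph.Walk.isPath_def, SimpleGraph.Walk.support_concat,
      List.nodup_append]
    refine ⟨hp.support_nodup, by simp, fun a ha b hb hab => ?_⟩
    rw [List.mem_singleton] at hb
    rw [hab, hb] at ha
    rw [SimpleGraph.Walk.mem_support_iff_exists_getVert] at ha
    obtain ⟨i, hgv, hile⟩ := ha
    rw [hlen] at hile
    rw [hvert i hile] at hgv
    have heq := add_left_cancel hgv
    have h1 : (i : Fin (m+3)).val = i := val_cast_lt m i (by omega)
    have h2 : ((L+1 : ℕ) : Fin (m+3)).val = L + 1 := val_cast_lt m (L+1) (by omega)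
    rw [Fin.ext_iff, h1, h2] at heq
    omega
theorem lower_bound (m k : ℕ) (f : Fin (m+3) → ℕ)
    (hf : IsRanking (SimpleGraph.cycleGraph (m+3)) k f) :
    Nat.log 2 (m+2) + 2 ≤ k := by
  obtain ⟨hb, hr⟩ := hf
  obtain ⟨v0, hv0⟩ := Finite.exists_max f
  have hmax : ∀ u : Fin (m+3), u ≠ v0 → f u < f v0 := by
    intro u hu
    rcases Nat.lt_or_ge (f u) (f v0) with h | h
    · exact h
    exfalso
    have heq : f v0 = f u := le_antisymm h (hv0 u)
    have hdne : u - v0 ≠ 0 := sub_ne_zero_of_ne hu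
    have hd1 : 1 ≤ (u - v0).val := by
      rcases Nat.eq_zero_or_pos (u - v0).val with h0 | h0
      · exact absurd (Fin.ext h0) hdne
      · exact h0
    obtain ⟨p, hp, hlen, hvert⟩ := arc_exists m v0 (u - v0).val (by omega)
    have hend : v0 + (((u - v0).val : ℕ) : Fin (m+3)) = u := by
      rw [Fin.cast_val_eq_self]; ring
    have hne : v0 ≠ v0 + (((u - v0).val : ℕ) : Fin (m+3)) := by
      rw [hend]; exact hu.symm
    obtain ⟨w, hw, hfw⟩ := hr p hp hne (by rw [hend]; exact heq)
    exact absurd (hv0 w) (by omega)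
  have hk1 : 1 ≤ k := le_trans (hb v0).1 (hb v0).2
  have hpr : PathRank (m+2) (k-1) (fun i => f (v0 + (i : Fin (m+3)))) := by
    constructor
    · intro i h1 h2
      show 1 ≤ f (v0 + (i : Fin (m+3))) ∧ f (v0 + (i : Fin (m+3))) ≤ k - 1
      have hne : v0 + (i : Fin (m+3)) ≠ v0 := by
        intro hcontra
        have : (i : Fin (m+3)) = 0 := by
          have := add_eq_left.mp hcontra  -- v0 + c = v0
          exact this
        rw [Fin.ext_iff, val_cast_lt m i (by omega)] at this
        simp at this; omega
      have h3 := hmax _ hne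
      have h4 := (hb (v0 + (i : Fin (m+3)))).1
      have h5 := (hb v0).2
      omega
    · intro i j h1 h2 h3 h4
      show ∃ l, i < l ∧ l < j ∧ f (v0 + (i : Fin (m+3))) < f (v0 + (l : Fin (m+3)))
      simp only at h4
      have hsub : ((j - i : ℕ) : Fin (m+3)) = (j : Fin (m+3)) - (i : Fin (m+3)) := by
        push_cast [Nat.le_of_lt h2]; ring
      obtain ⟨p, hp, hlen, hvert⟩ := arc_exists m (v0 + (i : Fin (m+3))) (j - i) (by omega)
      have hend : v0 + (i : Fin (m+3)) + ((j - i : ℕ) : Fin (m+3)) = v0 + (j : Fin (m+3)) := by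
        rw [hsub]; ring
      have hne : v0 + (i : Fin (m+3)) ≠ v0 + (i : Fin (m+3)) + ((j - i : ℕ) : Fin (m+3)) := by
        rw [hend]
        intro hcontra
        have := add_left_cancel hcontra
        rw [Fin.ext_iff, val_cast_lt m i (by omega), val_cast_lt m j (by omega)] at this
        omega
      obtain ⟨w, hw, hfw⟩ := hr p hp hne (by rw [hend]; exact h4)
      rw [SimpleGraph.Walk.mem_support_iff_exists_getVert] at hw
      obtain ⟨d, hgv, hdle⟩ := hw
      rw [hlen] at hdle
      rw [hvert d hdle] at hgv
      have hcast : v0 + ((i + d : ℕ) : Fin (m+3)) = w := by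
        rw [← hgv]; push_cast; ring
      have hd0 : d ≠ 0 := by
        intro h0
        subst h0
        rw [← hcast] at hfw
        simp only [Nat.add_zero] at hfw
        omega
      have hlj : i + d ≠ j := by
        intro hij
        rw [hij] at hcast
        rw [← hcast] at hfw
        omega
      refine ⟨i + d, by omega, by omega, ?_⟩
      rw [hcast]
      exact hfw
  have hle := pathRank_le hpr
  have hpow : m + 2 < 2 ^ (k-1) := by
    have : (0:ℕ) < 2 ^ (k-1) := Nat.pow_pos (by norm_num)
    omega
  have hlog := (Nat.log_lt_iff_lt_pow (by norm_num) (by omega : m + 2 ≠ 0)).mpr hpow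
  omega

theorem cycle_adj_cases (m : ℕ) {u b : Fin (m+3)} (h : (SimpleGraph.cycleGraph (m+3)).Adj u b) :
    b = u + 1 ∨ b = u - 1 := by
  rw [SimpleGraph.cycleGraph_adj'] at h
  rcases h with h | h
  · right
    have h2 : u - b = 1 := by apply Fin.ext; rw [h]; rfl
    have := sub_eq_iff_eq_add.mp h2
    rw [this]; ring
  · left
    have h2 : b - u = 1 := by apply Fin.ext; rw [h]; rfl
    have := sub_eq_iff_eq_add.mp h2
    rw [this]; ring

theorem path_structure (m : ℕ) {u v : Fin (m+3)} (p : (SimpleGraph.cycleGraph (m+3)).Walk u v)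
    (hp : p.IsPath) :
    (∀ i, i ≤ p.length → p.getVert i = u + (i : Fin (m+3))) ∨
    (∀ i, i ≤ p.length → p.getVert i = u - (i : Fin (m+3))) := by
  induction p with
  | nil =>
    left
    intro i hi
    simp only [SimpleGraph.Walk.length_nil, Nat.le_zero] at hi
    subst hi
    simp
  | @cons u b v h q ih =>
    rw [SimpleGraph.Walk.cons_isPath_iff] at hp
    obtain ⟨hq, hmem⟩ := hp
    rcases cycle_adj_cases m h with hb | hb
    · -- b = u + 1
      rcases ih hq with hdir | hdir
      · left
        intro i hi
        cases i with
        | zero => simp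
        | succ i =>
          rw [SimpleGraph.Walk.getVert_cons q h (by omega), Nat.add_sub_cancel]
          rw [hdir i (by simpa [SimpleGraph.Walk.length_cons] using hi), hb]
          push_cast
          ring
      · rcases Nat.eq_zero_or_pos q.length with h0 | h0
        · left
          intro i hi
          simp only [SimpleGraph.Walk.length_cons, h0] at hi
          interval_cases i
          · simp
          · rw [SimpleGraph.Walk.getVert_cons q h (by omega)]
            simp only [Nat.sub_self]
            rw [SimpleGraph.Walk.getVert_zero, hb]
            push_cast
            ring
        · exfalso
          apply hmem
          rw [SimpleGraph.Walk.mem_support_iff_exists_getVert]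
          refine ⟨1, ?_, h0⟩
          rw [hdir 1 h0, hb]
          push_cast
          ring
    · -- b = u - 1
      rcases ih hq with hdir | hdir
      · rcases Nat.eq_zero_or_pos q.length with h0 | h0
        · right
          intro i hi
          simp only [SimpleGraph.Walk.length_cons, h0] at hi
          interval_cases i
          · simp
          · rw [SimpleGraph.Walk.getVert_cons q h (by omega)]
            simp only [Nat.sub_self]
            rw [SimpleGraph.Walk.getVert_zero, hb]
            push_cast
            ring
        · exfalso
          apply hmem
          rw [SimpleGraph.Walk.mem_support_iff_exists_getVert]
          refine ⟨1, ?_, h0⟩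
          rw [hdir 1 h0, hb]
          push_cast
          ring
      · right
        intro i hi
        cases i with
        | zero => simp
        | succ i =>
          rw [SimpleGraph.Walk.getVert_cons q h (by omega), Nat.add_sub_cancel]
          rw [hdir i (by simpa [SimpleGraph.Walk.length_cons] using hi), hb]
          push_cast
          ring

noncomputable def fLabel (m : ℕ) : Fin (m+3) → ℕ :=
  fun v => if v = 0 then Nat.log 2 (m+2) + 2 else padicValNat 2 v.val + 1

theorem fLabel_lt_of_ne (m : ℕ) {w : Fin (m+3)} (hw : w ≠ 0) :
    fLabel m w < Nat.log 2 (m+2) + 2 := by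
  rw [fLabel, if_neg hw]
  have h1 : 1 ≤ w.val := by
    rcases Nat.eq_zero_or_pos w.val with h | h
    · exact absurd (Fin.ext h) hw
    · exact h
  have := padicValNat_le_log h1 (by omega : w.val ≤ m + 2)
  omega

theorem arcFind (m : ℕ) (u : Fin (m+3)) (L : ℕ) (hL1 : 1 ≤ L) (hL : L ≤ m + 2)
    (hu : u ≠ 0) (hv : u + (L : Fin (m+3)) ≠ 0)
    (hf : fLabel m u = fLabel m (u + (L : Fin (m+3)))) :
    ∃ i, i ≤ L ∧ fLabel m u < fLabel m (u + (i : Fin (m+3))) := by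
  set a := u.val with ha
  have ha1 : 1 ≤ a := by
    rcases Nat.eq_zero_or_pos a with h | h
    · exact absurd (Fin.ext h) hu
    · exact h
  have ha2 : a ≤ m + 2 := by omega
  rcases le_or_gt (a + L) (m + 2) with hcase | hcase
  · -- arc stays away from 0
    have hval : ∀ i, i ≤ L → (u + (i : Fin (m+3))).val = a + i := by
      intro i hi
      rw [Fin.val_add, val_cast_lt m i (by omega), Nat.mod_eq_of_lt (by omega)]
    have hne0 : ∀ i, i ≤ L → 1 ≤ a + i → u + (i : Fin (m+3)) ≠ 0 := by
      intro i hi h1 hcontra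
      have := hval i hi
      rw [hcontra] at this
      simp at this
      omega
    have hfu : fLabel m u = padicValNat 2 a + 1 := by rw [fLabel, if_neg hu]
    have hfv : fLabel m (u + (L : Fin (m+3))) = padicValNat 2 (a + L) + 1 := by
      rw [fLabel, if_neg hv, hval L le_rfl]
    have heq : padicValNat 2 a = padicValNat 2 (a + L) := by
      rw [hfu, hfv] at hf
      omega
    obtain ⟨l, hl1, hl2, hl3⟩ := (pathRank_val (m+2)).2 a (a + L) ha1 (by omega) hcase
      (by simp only; omega)
    simp only at hl3
    refine ⟨l - a, by omega, ?_⟩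
    have hvl : (u + ((l - a : ℕ) : Fin (m+3))).val = l := by
      rw [hval (l - a) (by omega)]
      omega
    have hne : u + ((l - a : ℕ) : Fin (m+3)) ≠ 0 := by
      intro hcontra
      rw [hcontra] at hvl
      simp at hvl
      omega
    rw [hfu, fLabel, if_neg hne, hvl]
    omega
  · -- the vertex 0 lies on the arc
    refine ⟨(m + 3) - a, by omega, ?_⟩
    have hval : (u + (((m+3) - a : ℕ) : Fin (m+3))).val = 0 := by
      rw [Fin.val_add, val_cast_lt m ((m+3) - a) (by omega)]
      have : a + ((m+3) - a) = m + 3 := by omega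
      rw [this, Nat.mod_self]
    have h0 : u + (((m+3) - a : ℕ) : Fin (m+3)) = 0 := Fin.ext (by simpa using hval)
    rw [h0]
    have hK : fLabel m (0 : Fin (m+3)) = Nat.log 2 (m+2) + 2 := by rw [fLabel, if_pos rfl]
    rw [hK]
    exact fLabel_lt_of_ne m hu

theorem upper_bound (m : ℕ) :
    ∃ f, IsRanking (SimpleGraph.cycleGraph (m+3)) (Nat.log 2 (m+2) + 2) f := by
  refine ⟨fLabel m, fun w => ?_, ?_⟩
  · by_cases hw : w = 0
    · subst hw
      rw [fLabel, if_pos rfl]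
      omega
    · have h1 := fLabel_lt_of_ne m hw
      have h2 : 1 ≤ fLabel m w := by rw [fLabel, if_neg hw]; omega
      omega
  · intro u v p hp huv hfeq
    have hlen_pos : 1 ≤ p.length := by
      rcases Nat.eq_zero_or_pos p.length with h0 | h0
      · exfalso
        have h1 := SimpleGraph.Walk.getVert_length p
        rw [h0, SimpleGraph.Walk.getVert_zero] at h1
        exact huv h1
      · exact h0
    have hlenlt : p.length < m + 3 := by
      have := hp.length_lt
      simpa using this
    have hu0 : u ≠ 0 := by
      intro h
      subst h
      have hv0 : v ≠ 0 := Ne.symm huv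
      have := fLabel_lt_of_ne m hv0
      rw [← hfeq, fLabel, if_pos rfl] at this
      omega
    have hv0 : v ≠ 0 := by
      intro h
      subst h
      have := fLabel_lt_of_ne m hu0
      rw [hfeq, fLabel, if_pos rfl] at this
      omega
    rcases path_structure m p hp with hdir | hdir
    · have hv_eq : v = u + ((p.length : ℕ) : Fin (m+3)) := by
        rw [← hdir p.length le_rfl, SimpleGraph.Walk.getVert_length]
      obtain ⟨i, hiL, hfi⟩ := arcFind m u p.length hlen_pos (by omega) hu0
        (hv_eq ▸ hv0) (hv_eq ▸ hfeq)
      refine ⟨p.getVert i, ?_, ?_⟩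
      · exact SimpleGraph.Walk.mem_support_iff_exists_getVert.mpr ⟨i, rfl, hiL⟩
      · rw [hdir i hiL]
        exact hfi
    · have hv_eq : v = u - ((p.length : ℕ) : Fin (m+3)) := by
        rw [← hdir p.length le_rfl, SimpleGraph.Walk.getVert_length]
      have hu_eq : u = v + ((p.length : ℕ) : Fin (m+3)) := by
        have h1 : u = (u - ((p.length : ℕ) : Fin (m+3))) + ((p.length : ℕ) : Fin (m+3)) := by ring
        rw [← hv_eq] at h1
        exact h1
      obtain ⟨i, hiL, hfi⟩ := arcFind m v p.length hlen_pos (by omega) hv0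
        (hu_eq ▸ hu0) (hu_eq ▸ hfeq.symm)
      refine ⟨p.getVert (p.length - i), ?_, ?_⟩
      · exact SimpleGraph.Walk.mem_support_iff_exists_getVert.mpr ⟨p.length - i, rfl, by omega⟩
      · rw [hdir (p.length - i) (by omega)]
        have hcast : u - ((p.length - i : ℕ) : Fin (m+3)) = v + (i : Fin (m+3)) := by
          have h1 : u - ((p.length - i : ℕ) : Fin (m+3)) =
              (u - ((p.length : ℕ) : Fin (m+3))) + (i : Fin (m+3)) := by
            push_cast [hiL]
            ring
          rw [← hv_eq] at h1
          exact h1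
        rw [hcast, hfeq]
        exact hfi

/-- For every integer `n ≥ 3`, the tree-depth of the cycle graph `C_n` on `n` vertices
equals `⌊log₂ (n−1)⌋ + 2`. -/
theorem treedepth_cycleGraph (n : ℕ) (hn : 3 ≤ n) :
    treedepth (SimpleGraph.cycleGraph n) = Nat.log 2 (n - 1) + 2 := by
  obtain ⟨m, rfl⟩ : ∃ m, n = m + 3 := ⟨n - 3, by omega⟩
  have h1 : m + 3 - 1 = m + 2 := rfl
  rw [h1, treedepth]
  have hne : {k | ∃ f, IsRanking (SimpleGraph.cycleGraph (m+3)) k f}.Nonempty :=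
    ⟨Nat.log 2 (m+2) + 2, upper_bound m⟩
  apply le_antisymm
  · exact Nat.sInf_le (upper_bound m)
  · obtain ⟨f, hf⟩ := Nat.sInf_mem hne
    exact lower_bound m _ f hf
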